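/- (Maksimova) Every 1-finite transitive normal unimodal logic is locally tabular: if a normal unimodal logic L contains ◇◇p_0 → ◇p_0 and is 1-finite, then L is k-finite for every k < ω. -/

import Mathlib

set_option maxHeartbeats 1000000

/-- Modal formulas over an alphabet `A` of diamonds, with variables `pₙ`,
falsum and implication as primitive Boolean connectives. -/
inductive MF (A : Type) : Type
  | var : ℕ → MF A
  | bot : MF A
  | imp : MF A → MF A → MF A
  | dia : A → MF A → MF A

namespace MF

variable {A : Type}

def neg (φ : MF A) : MF A := .imp φ .bot
def top : MF A := neg .bot
def or (φ ψ : MF A) : MF A := .imp (neg φ) ψ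
def and (φ ψ : MF A) : MF A := neg (.imp φ (neg ψ))
def box (a : A) (φ : MF A) : MF A := neg (.dia a (neg φ))
def iff (φ ψ : MF A) : MF A := and (.imp φ ψ) (.imp ψ φ)

def bigOr : List (MF A) → MF A
  | [] => .bot
  | φ :: r => or φ (bigOr r)

def bigAnd : List (MF A) → MF A
  | [] => top
  | φ :: r => and φ (bigAnd r)

def subst (σ : ℕ → MF A) : MF A → MF A
  | .var n => σ n
  | .bot => .bot
  | .imp φ ψ => .imp (subst σ φ) (subst σ ψ)
  | .dia a φ => .dia a (subst σ φ)

/-- `φ` is a `k`-formula: all its variables are among `p₀,…,p_{k-1}`. -/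
def varsBelow (k : ℕ) : MF A → Prop
  | .var n => n < k
  | .bot => True
  | .imp φ ψ => varsBelow k φ ∧ varsBelow k ψ
  | .dia _ φ => varsBelow k φ

/-- Modal depth: maximal number of nested modalities. -/
def depth : MF A → ℕ
  | .var _ => 0
  | .bot => 0
  | .imp φ ψ => max (depth φ) (depth ψ)
  | .dia _ φ => depth φ + 1

end MF

/-- Truth in a Kripke model `(X, R, θ)` at a point. -/
def satM {A X : Type} (R : A → X → X → Prop) (θ : ℕ → Set X) : X → MF A → Prop
  | w, MF.var n => w ∈ θ n
  | _, MF.bot => False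
  | w, MF.imp φ ψ => satM R θ w φ → satM R θ w ψ
  | w, MF.dia a φ => ∃ v, R a w v ∧ satM R θ v φ

/-- Validity in a Kripke frame. -/
def validM {A X : Type} (R : A → X → X → Prop) (φ : MF A) : Prop :=
  ∀ θ w, satM R θ w φ

/-- `φ` is a substitution instance of a classical propositional tautology
(equivalently: true under every Boolean valuation treating variables and
diamond formulas as atoms). -/
def IsTautInstance {A : Type} (φ : MF A) : Prop :=
  ∀ f : MF A → Prop, ¬ f .bot → (∀ ψ χ, f (.imp ψ χ) ↔ (f ψ → f χ)) → f φ

/-- `L` is a normal modal logic over `A`. -/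
structure IsNormalLogic {A : Type} (L : Set (MF A)) : Prop where
  taut : ∀ φ : MF A, IsTautInstance φ → φ ∈ L
  dia_bot : ∀ a : A, (MF.dia a MF.bot).neg ∈ L
  dia_or : ∀ a : A,
    MF.imp (.dia a (MF.or (.var 0) (.var 1))) (MF.or (.dia a (.var 0)) (.dia a (.var 1))) ∈ L
  mp : ∀ {φ ψ : MF A}, MF.imp φ ψ ∈ L → φ ∈ L → ψ ∈ L
  subst_mem : ∀ {φ : MF A} (σ : ℕ → MF A), φ ∈ L → φ.subst σ ∈ L
  mono : ∀ (a : A) {φ ψ : MF A}, MF.imp φ ψ ∈ L → MF.imp (.dia a φ) (.dia a ψ) ∈ L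

/-- `L` is `k`-finite: there are finitely many `k`-formulas up to `L`-equivalence. -/
def kFinite {A : Type} (L : Set (MF A)) (k : ℕ) : Prop :=
  ∃ S : Finset (MF A), ∀ φ : MF A, φ.varsBelow k → ∃ ψ ∈ S, MF.iff φ ψ ∈ L

def LocallyTabular {A : Type} (L : Set (MF A)) : Prop := ∀ k : ℕ, kFinite L k

/-- `◇_S φ`, the disjunction of `◇φ` over `◇ ∈ S`. -/
noncomputable def diaS {A : Type} (S : Finset A) (φ : MF A) : MF A :=
  MF.bigOr (S.toList.map (fun a => MF.dia a φ))

/-- `(◇_S)^n φ`. -/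
noncomputable def diaSpow {A : Type} (S : Finset A) : ℕ → MF A → MF A
  | 0, φ => φ
  | n + 1, φ => diaS S (diaSpow S n φ)

/-- `◇_S^{≤ m} φ = ⋁_{i ≤ m} (◇_S)^i φ`. -/
noncomputable def diaSle {A : Type} (S : Finset A) (m : ℕ) (φ : MF A) : MF A :=
  MF.bigOr ((List.range (m + 1)).map (fun i => diaSpow S i φ))

/-- `□* φ = ¬◇_S^{≤ m}¬φ`. -/
noncomputable def boxSle {A : Type} (S : Finset A) (m : ℕ) (φ : MF A) : MF A :=
  MF.neg (diaSle S m (MF.neg φ))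

/-- The pretransitivity formula `atr_S(m) = (◇_S)^{m+1} p₀ → ◇_S^{≤m} p₀`. -/
noncomputable def atrS {A : Type} (S : Finset A) (m : ℕ) : MF A :=
  MF.imp (diaSpow S (m + 1) (.var 0)) (diaSle S m (.var 0))

/-- The finite-height formulas `B_h^{≤m}` over the compound modality `◇_S^{≤m}`:
`B₀ = ⊥`, `B_h = p_h → □*(◇* p_h ∨ B_{h-1})`. -/
noncomputable def BstarS {A : Type} (S : Finset A) (m : ℕ) : ℕ → MF A
  | 0 => .bot
  | h + 1 => MF.imp (.var (h + 1))
      (boxSle S m (MF.or (diaSle S m (.var (h + 1))) (BstarS S m h)))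

/-- Unimodal finite-height formulas: `B₀ = ⊥`, `B_h = p_h → □(◇ p_h ∨ B_{h-1})`. -/
def BformU : ℕ → MF Unit
  | 0 => .bot
  | h + 1 => MF.imp (.var (h + 1))
      (MF.box () (MF.or (MF.dia () (.var (h + 1))) (BformU h)))

/-- `p_i ∧ ◇_S (p_{i+1} ∧ ◇_S ( … ∧ ◇_S p_{i+n}) … )`. -/
noncomputable def chainS {A : Type} (S : Finset A) : ℕ → ℕ → MF A
  | i, 0 => .var i
  | i, n + 1 => MF.and (.var i) (diaS S (chainS S (i + 1) n))

/-- The list of pairs `(i, j)` with `i < j ≤ n`. -/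
def pairsLT (n : ℕ) : List (ℕ × ℕ) :=
  (List.range (n + 1)).flatMap (fun j => (List.range j).map (fun i => (i, j)))

/-- The reducible-path formula `R_m(◇_S)`. -/
noncomputable def RmS {A : Type} (S : Finset A) (m : ℕ) : MF A :=
  MF.imp (chainS S 0 (m + 1))
    (MF.or
      (MF.bigOr ((pairsLT (m + 1)).map
        (fun p => diaSpow S p.1 (MF.and (.var p.1) (.var p.2)))))
      (MF.bigOr ((pairsLT m).map
        (fun p => diaSpow S p.1 (MF.and (.var p.1) (diaS S (.var (p.2 + 1))))))))

/-- `n`-fold relational composition: `R⁰ = Id`, `R^{n+1} = R ∘ Rⁿ`. -/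
def relPow {X : Type} (R : X → X → Prop) : ℕ → X → X → Prop
  | 0 => fun a b => a = b
  | n + 1 => fun a c => ∃ b, R a b ∧ relPow R n b c

/-- Reflexive transitive closure `R* = ⋃ₙ Rⁿ`. -/
def relStar {X : Type} (R : X → X → Prop) (a b : X) : Prop := ∃ n, relPow R n a b

/-- `R` is `m`-transitive: `R^{m+1} ⊆ R^{≤ m}`. -/
def mTransitive {X : Type} (R : X → X → Prop) (m : ℕ) : Prop :=
  ∀ a b, relPow R (m + 1) a b → ∃ i ≤ m, relPow R i a b

/-- The union `R_F = ⋃_{◇ ∈ A} R_◇`. -/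
def unionRel {A X : Type} (R : A → X → X → Prop) : X → X → Prop :=
  fun a b => ∃ i, R i a b

/-- `R⁻¹[V] = {x ∣ ∃ y ∈ V, x R y}`. -/
def diaPre {X : Type} (R : X → X → Prop) (V : Set X) : Set X := {x | ∃ y ∈ V, R x y}

/-- The height of `(X, R)` is at most `h`: there is no strictly ascending
(h+1)-chain with respect to `R*`. -/
def heightLE {X : Type} (R : X → X → Prop) (h : ℕ) : Prop :=
  ¬ ∃ x : ℕ → X, ∀ i < h, relStar R (x i) (x (i + 1)) ∧ ¬ relStar R (x (i + 1)) (x i)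

/-- A partition is `R`-tuned. -/
def RTuned {X : Type} (R : X → X → Prop) (𝒰 : Set (Set X)) : Prop :=
  ∀ U ∈ 𝒰, ∀ V ∈ 𝒰, (∃ a ∈ U, ∃ b ∈ V, R a b) → ∀ a ∈ U, ∃ b ∈ V, R a b

/-- A partition is tuned in the frame `(X, (R_◇)_{◇ ∈ A})`. -/
def TunedIn {A X : Type} (R : A → X → X → Prop) (𝒰 : Set (Set X)) : Prop :=
  ∀ a : A, RTuned (R a) 𝒰

/-- `𝒰` refines `𝒱`: every block of `𝒰` is included in a block of `𝒱`. -/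
def Refines {X : Type} (𝒰 𝒱 : Set (Set X)) : Prop := ∀ U ∈ 𝒰, ∃ V ∈ 𝒱, U ⊆ V

/-- The equivalence `≡_𝒱` induced by a family of sets. -/
def famEq {X : Type} (𝒱 : Set (Set X)) (a b : X) : Prop := ∀ V ∈ 𝒱, (a ∈ V ↔ b ∈ V)

/-- The set of equivalence classes of a relation. -/
def eqClasses {X : Type} (E : X → X → Prop) : Set (Set X) := {C | ∃ x, C = {y | E x y}}

/-- Tunedness condition for abstract normal operators `g_◇` on the powerset. -/
def gTuned {A X : Type} (g : A → Set X → Set X) (𝒰 : Set (Set X)) : Prop :=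
  ∀ a : A, ∀ U ∈ 𝒰, ∀ V ∈ 𝒰, (V ∩ g a U).Nonempty → V ⊆ g a U

/-- `C` is a subalgebra of the modal algebra `(𝒫(X), ∪, ∩, ᶜ, (g_◇))`. -/
def IsSubalg {A X : Type} (g : A → Set X → Set X) (C : Set (Set X)) : Prop :=
  ∅ ∈ C ∧ Set.univ ∈ C ∧ (∀ U ∈ C, ∀ V ∈ C, U ∪ V ∈ C) ∧
    (∀ U ∈ C, ∀ V ∈ C, U ∩ V ∈ C) ∧ (∀ U ∈ C, Uᶜ ∈ C) ∧ (∀ U ∈ C, ∀ a : A, g a U ∈ C)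

/-- The subalgebra generated by `𝒬`. -/
def genAlg {A X : Type} (g : A → Set X → Set X) (𝒬 : Set (Set X)) : Set (Set X) :=
  ⋂₀ {C | IsSubalg g C ∧ 𝒬 ⊆ C}

/-- Points of a model indistinguishable by `k`-formulas of depth at most `d`. -/
def modEq {A X : Type} (R : A → X → X → Prop) (θ : ℕ → Set X) (k d : ℕ) (a b : X) : Prop :=
  ∀ φ : MF A, φ.varsBelow k → φ.depth ≤ d → (satM R θ a φ ↔ satM R θ b φ)

/-- Points of a model indistinguishable by all `k`-formulas. -/
def modEqAll {A X : Type} (R : A → X → X → Prop) (θ : ℕ → Set X) (k : ℕ) (a b : X) : Prop :=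
  ∀ φ : MF A, φ.varsBelow k → (satM R θ a φ ↔ satM R θ b φ)

/-- The modal depth of the `k`-model `(X, R, θ)` is at most `d`. -/
def mdModelLE {A X : Type} (R : A → X → X → Prop) (θ : ℕ → Set X) (k d : ℕ) : Prop :=
  ∀ e : ℕ, modEq R θ k e ≠ modEq R θ k (e + 1) → e ≤ d

/-- Bundled Kripke frames over the alphabet `A`. -/
structure KFrame (A : Type) : Type 1 where
  W : Type
  R : A → W → W → Prop

/-- The logic of a class of Kripke frames. -/
def LogC {A : Type} (𝓕 : Set (KFrame A)) : Set (MF A) :=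
  {φ | ∀ F ∈ 𝓕, validM F.R φ}

/-- `Y` is an upset of the frame: `R_◇[Y] ⊆ Y` for every `◇`. -/
def UpsetIn {A X : Type} (R : A → X → X → Prop) (Y : Set X) : Prop :=
  ∀ a : A, ∀ y ∈ Y, ∀ z, R a y z → z ∈ Y

/-- The relations of a frame restricted to a subset. -/
def restrR {A X : Type} (R : A → X → X → Prop) (Y : Set X) : A → Y → Y → Prop :=
  fun a u v => R a u.val v.val

/-- A valuation restricted to a subset. -/
def restrV {X : Type} (θ : ℕ → Set X) (Y : Set X) : ℕ → Set Y :=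
  fun n => {u | u.val ∈ θ n}

/-- The restriction `F ↾ Y` of a frame to a subset of its domain. -/
def KFrame.restrict {A : Type} (F : KFrame A) (Y : Set F.W) : KFrame A :=
  ⟨Y, restrR F.R Y⟩

/-- The induced partitions `𝒱_d`: `𝒱₀ = X/≡_𝒱` and `𝒱_{d+1}` is the quotient by
the family `𝒱_d ∪ {R_◇⁻¹[V] : ◇ ∈ A, V ∈ 𝒱_d}`. -/
def stageClasses {A X : Type} (R : A → X → X → Prop) (𝒱 : Set (Set X)) : ℕ → Set (Set X)
  | 0 => eqClasses (famEq 𝒱)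
  | d + 1 =>
      eqClasses (famEq (stageClasses R 𝒱 d ∪
        {V' | ∃ a : A, ∃ V ∈ stageClasses R 𝒱 d, V' = diaPre (R a) V}))

/-- `𝒱_ω = ⋃_d 𝒱_d`. -/
def stageUnion {A X : Type} (R : A → X → X → Prop) (𝒱 : Set (Set X)) : Set (Set X) :=
  ⋃ d : ℕ, stageClasses R 𝒱 d

/-- `md(V) = min {d ∣ V ∈ 𝒱_d}` (as an extended natural). -/
noncomputable def mdBlock {A X : Type} (R : A → X → X → Prop) (𝒱 : Set (Set X))
    (V : Set X) : ℕ∞ :=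
  ⨅ d ∈ {d : ℕ | V ∈ stageClasses R 𝒱 d}, (d : ℕ∞)

/-- `md(𝒱) = sup {md(V) ∣ V ∈ 𝒱_ω}`. -/
noncomputable def mdFam {A X : Type} (R : A → X → X → Prop) (𝒱 : Set (Set X)) : ℕ∞ :=
  ⨆ V ∈ stageUnion R 𝒱, mdBlock R 𝒱 V

/-- The modal depth of a frame: `sup` of `md(𝒱)` over finite families `𝒱`. -/
noncomputable def mdFrame {A : Type} (F : KFrame A) : ℕ∞ :=
  ⨆ 𝒱 ∈ {𝒱 : Set (Set F.W) | 𝒱.Finite}, mdFam F.R 𝒱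

/-- The modal depth of a class of frames. -/
noncomputable def mdClass {A : Type} (𝓕 : Set (KFrame A)) : ℕ∞ :=
  ⨆ F ∈ 𝓕, mdFrame F

/-- `md(L) = sup_φ min {md(ψ) ∣ φ ↔ ψ ∈ L}`. -/
noncomputable def mdLogic {A : Type} (L : Set (MF A)) : ℕ∞ :=
  ⨆ φ : MF A, ⨅ ψ ∈ {ψ : MF A | MF.iff φ ψ ∈ L}, (ψ.depth : ℕ∞)

/-- `tra(𝓕)`: the least `m` such that every frame in `𝓕` is `m`-transitive. -/
noncomputable def traClass {A : Type} (𝓕 : Set (KFrame A)) : ℕ∞ :=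
  ⨅ m ∈ {m : ℕ | ∀ F ∈ 𝓕, mTransitive (unionRel F.R) m}, (m : ℕ∞)

/-- The disjoint sum of a family of frames. -/
def disjSum {A I : Type} (F : I → KFrame A) : KFrame A where
  W := Σ i : I, (F i).W
  R a x y := ∃ (i : I) (u v : (F i).W), x = ⟨i, u⟩ ∧ y = ⟨i, v⟩ ∧ (F i).R a u v

/-- The cluster of a point: its equivalence class under `a R* b ∧ b R* a`. -/
def clusterOf {X : Type} (R : X → X → Prop) (x : X) : Set X :=
  {y | relStar R x y ∧ relStar R y x}

/-- `clust(𝓕)`: the restrictions of frames in `𝓕` to their clusters. -/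
def clustC {A : Type} (𝓕 : Set (KFrame A)) : Set (KFrame A) :=
  {G | ∃ F ∈ 𝓕, ∃ x : F.W, G = F.restrict (clusterOf (unionRel F.R) x)}


/-! ### Auxiliary development for Statement 9 -/

section MaksAux

open MF

/-! #### Boolean-valuation level lemmas -/

section BVal
variable {f : MF Unit → Prop} (hb : ¬ f .bot) (hi : ∀ ψ χ, f (.imp ψ χ) ↔ (f ψ → f χ))

include hb

theorem fBot : f .bot ↔ False := iff_false_intro hb

include hi

theorem fNeg (a : MF Unit) : f a.neg ↔ ¬ f a := by
  show f (MF.imp a .bot) ↔ _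
  rw [hi]; exact ⟨fun h ha => hb (h ha), fun h ha => absurd ha h⟩

theorem fTop : f MF.top ↔ True := by
  rw [show (MF.top : MF Unit) = MF.neg .bot from rfl, fNeg hb hi]; tauto

theorem fOr (a b : MF Unit) : f (MF.or a b) ↔ f a ∨ f b := by
  show f (MF.imp a.neg b) ↔ _
  rw [hi, fNeg hb hi]; tauto

theorem fAnd (a b : MF Unit) : f (MF.and a b) ↔ f a ∧ f b := by
  show f (MF.neg (.imp a b.neg)) ↔ _
  rw [fNeg hb hi, hi, fNeg hb hi]; tauto

theorem fIff (a b : MF Unit) : f (MF.iff a b) ↔ (f a ↔ f b) := by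
  show f (MF.and (.imp a b) (.imp b a)) ↔ _
  rw [fAnd hb hi, hi, hi]; tauto

theorem fBigAnd (l : List (MF Unit)) : f (MF.bigAnd l) ↔ ∀ x ∈ l, f x := by
  induction l with
  | nil => simp [MF.bigAnd, fTop hb hi]
  | cons a l ih => simp [MF.bigAnd, fAnd hb hi, ih]

theorem fBigOr (l : List (MF Unit)) : f (MF.bigOr l) ↔ ∃ x ∈ l, f x := by
  induction l with
  | nil => simp [MF.bigOr, fBot hb]
  | cons a l ih => simp [MF.bigOr, fOr hb hi, ih]

end BVal

/-! #### Derived facts about normal logics -/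

section Logic
variable {L : Set (MF Unit)} (hL : IsNormalLogic L)

include hL

theorem Ltaut {φ : MF Unit}
    (h : ∀ f : MF Unit → Prop, ¬ f .bot → (∀ ψ χ, f (.imp ψ χ) ↔ (f ψ → f χ)) → f φ) :
    φ ∈ L := hL.taut φ h

theorem Lmp2 {a b c : MF Unit} (h : MF.imp a (MF.imp b c) ∈ L) (ha : a ∈ L) (hb : b ∈ L) :
    c ∈ L := hL.mp (hL.mp h ha) hb

theorem Limp_trans {a b c : MF Unit} (h1 : MF.imp a b ∈ L) (h2 : MF.imp b c ∈ L) :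
    MF.imp a c ∈ L := by
  refine Lmp2 hL (Ltaut hL ?_) h1 h2
  intro f hb hi; simp only [hi]; tauto

theorem Liff_intro {a b : MF Unit} (h1 : MF.imp a b ∈ L) (h2 : MF.imp b a ∈ L) :
    MF.iff a b ∈ L := by
  refine Lmp2 hL (Ltaut hL ?_) h1 h2
  intro f hb hi; simp only [hi, fIff hb hi]; tauto

theorem Liff_mp {a b : MF Unit} (h : MF.iff a b ∈ L) : MF.imp a b ∈ L := by
  refine hL.mp (Ltaut hL ?_) h
  intro f hb hi; simp only [hi, fIff hb hi]; tauto

theorem Liff_mpr {a b : MF Unit} (h : MF.iff a b ∈ L) : MF.imp b a ∈ L := by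
  refine hL.mp (Ltaut hL ?_) h
  intro f hb hi; simp only [hi, fIff hb hi]; tauto

theorem Liff_symm {a b : MF Unit} (h : MF.iff a b ∈ L) : MF.iff b a ∈ L :=
  Liff_intro hL (Liff_mpr hL h) (Liff_mp hL h)

theorem Liff_trans {a b c : MF Unit} (h1 : MF.iff a b ∈ L) (h2 : MF.iff b c ∈ L) :
    MF.iff a c ∈ L :=
  Liff_intro hL (Limp_trans hL (Liff_mp hL h1) (Liff_mp hL h2))
    (Limp_trans hL (Liff_mpr hL h2) (Liff_mpr hL h1))

theorem Lmono {a b : MF Unit} (h : MF.imp a b ∈ L) :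
    MF.imp (.dia () a) (.dia () b) ∈ L := hL.mono () h

theorem Ldia_or (a b : MF Unit) :
    MF.imp (.dia () (MF.or a b)) (MF.or (.dia () a) (.dia () b)) ∈ L := by
  have := hL.subst_mem (fun n => if n = 0 then a else b) (hL.dia_or ())
  exact this

theorem Ldia_iff {a b : MF Unit} (h : MF.iff a b ∈ L) :
    MF.iff (.dia () a) (.dia () b) ∈ L :=
  Liff_intro hL (Lmono hL (Liff_mp hL h)) (Lmono hL (Liff_mpr hL h))

/-- The K-style lemma: `◇a ∧ ¬◇¬b → ◇(a ∧ b)`. -/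
theorem LdiaK (a b : MF Unit) :
    MF.imp (MF.and (.dia () a) (MF.neg (.dia () b.neg))) (.dia () (MF.and a b)) ∈ L := by
  have h2 : MF.imp (.dia () a) (.dia () (MF.or (MF.and a b) (MF.and a b.neg))) ∈ L := by
    refine Lmono hL (Ltaut hL ?_)
    intro f hb hi; simp only [hi, fOr hb hi, fAnd hb hi, fNeg hb hi]; tauto
  have h3 := Ldia_or hL (MF.and a b) (MF.and a b.neg)
  have h5 : MF.imp (.dia () (MF.and a b.neg)) (.dia () b.neg) ∈ L := by
    refine Lmono hL (Ltaut hL ?_)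
    intro f hb hi; simp only [hi, fAnd hb hi, fNeg hb hi]; tauto
  have glue : MF.imp (MF.imp (.dia () a) (.dia () (MF.or (MF.and a b) (MF.and a b.neg))))
      (MF.imp (MF.imp (.dia () (MF.or (MF.and a b) (MF.and a b.neg)))
          (MF.or (.dia () (MF.and a b)) (.dia () (MF.and a b.neg))))
        (MF.imp (MF.imp (.dia () (MF.and a b.neg)) (.dia () b.neg))
          (MF.imp (MF.and (.dia () a) (MF.neg (.dia () b.neg))) (.dia () (MF.and a b))))) ∈ L := by
    refine Ltaut hL ?_
    intro f hb hi; simp only [hi, fOr hb hi, fAnd hb hi, fNeg hb hi]; tauto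
  exact hL.mp (Lmp2 hL glue h2 h3) h5

end Logic


/-! #### Theories: points of the canonical model -/

/-- A complete `L`-theory. -/
def Th (L : Set (MF Unit)) (v : MF Unit → Prop) : Prop :=
  ¬ v .bot ∧ (∀ a b, v (MF.imp a b) ↔ (v a → v b)) ∧ ∀ φ ∈ L, v φ

section Th
variable {L : Set (MF Unit)} {v : MF Unit → Prop} (hv : Th L v)
include hv

theorem Th.mp' {a b : MF Unit} (h : v (MF.imp a b)) (ha : v a) : v b := (hv.2.1 a b).1 h ha
theorem Th.ofL {a : MF Unit} (h : a ∈ L) : v a := hv.2.2 a h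
theorem Th.det {a b : MF Unit} (h : MF.imp a b ∈ L) (ha : v a) : v b := hv.mp' (hv.ofL h) ha
theorem Th.negI {a : MF Unit} : v a.neg ↔ ¬ v a := fNeg hv.1 hv.2.1 a
theorem Th.andI {a b : MF Unit} : v (MF.and a b) ↔ v a ∧ v b := fAnd hv.1 hv.2.1 a b
theorem Th.orI {a b : MF Unit} : v (MF.or a b) ↔ v a ∨ v b := fOr hv.1 hv.2.1 a b
theorem Th.bigOrI {l : List (MF Unit)} : v (MF.bigOr l) ↔ ∃ x ∈ l, v x := fBigOr hv.1 hv.2.1 l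
theorem Th.topI : v MF.top := (fTop hv.1 hv.2.1).2 trivial
theorem Th.iffE {a b : MF Unit} (h : MF.iff a b ∈ L) : v a ↔ v b :=
  (fIff hv.1 hv.2.1 a b).1 (hv.ofL h)

end Th

/-! #### Consistency and the Lindenbaum lemma -/

/-- `Γ` is `L`-consistent. -/
def LCon (L : Set (MF Unit)) (Γ : Set (MF Unit)) : Prop :=
  ¬ ∃ l : List (MF Unit), (∀ x ∈ l, x ∈ Γ) ∧ MF.imp (MF.bigAnd l) .bot ∈ L

section Lind
variable {L : Set (MF Unit)} (hL : IsNormalLogic L)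
include hL

theorem LcutBot {φ : MF Unit} {l l' m : List (MF Unit)}
    (h1 : MF.imp (MF.bigAnd l) φ ∈ L) (h2 : MF.imp (MF.bigAnd l') .bot ∈ L)
    (hsub : ∀ x ∈ l', x = φ ∨ x ∈ m) :
    MF.imp (MF.bigAnd (l ++ m)) .bot ∈ L := by
  refine Lmp2 hL (Ltaut hL ?_) h1 h2
  intro f hb hi
  simp only [hi, fBigAnd hb hi, fBot hb, List.mem_append]
  intro hlφ hl' hall
  apply hl'
  intro x hx
  rcases hsub x hx with rfl | hxm
  · exact hlφ fun y hy => hall y (Or.inl hy)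
  · exact hall x (Or.inr hxm)

theorem LnegFrom {φ : MF Unit} {l' m : List (MF Unit)}
    (h2 : MF.imp (MF.bigAnd l') .bot ∈ L) (hsub : ∀ x ∈ l', x = φ ∨ x ∈ m) :
    MF.imp (MF.bigAnd m) φ.neg ∈ L := by
  refine hL.mp (Ltaut hL ?_) h2
  intro f hb hi
  simp only [hi, fBigAnd hb hi, fBot hb, fNeg hb hi]
  intro h1 hm hφ
  apply h1
  intro x hx
  rcases hsub x hx with rfl | h
  · exact hφ
  · exact hm x h

theorem lindenbaum {Γ : Set (MF Unit)} (hc : LCon L Γ) :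
    ∃ v : MF Unit → Prop, Th L v ∧ ∀ φ ∈ Γ, v φ := by
  classical
  set S : Set (Set (MF Unit)) := {Δ | Γ ⊆ Δ ∧ LCon L Δ} with hS
  have hzorn : ∀ c ⊆ S, IsChain (· ⊆ ·) c → c.Nonempty →
      ∃ ub ∈ S, ∀ s ∈ c, s ⊆ ub := by
    intro c hcS hchain hcne
    obtain ⟨Δ0, hΔ0⟩ := hcne
    refine ⟨⋃₀ c, ⟨(hcS hΔ0).1.trans (Set.subset_sUnion_of_mem hΔ0), ?_⟩,
      fun s hs => Set.subset_sUnion_of_mem hs⟩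
    rintro ⟨l, hl, hder⟩
    have key : ∃ Δ' ∈ c, ∀ x ∈ l, x ∈ Δ' := by
      clear hder
      induction l with
      | nil => exact ⟨Δ0, hΔ0, by simp⟩
      | cons a l ih =>
        obtain ⟨Δ1, h1, hl1⟩ := ih fun x hx => hl x (List.mem_cons_of_mem _ hx)
        obtain ⟨Δ2, h2, ha⟩ := hl a List.mem_cons_self
        rcases eq_or_ne Δ1 Δ2 with rfl | hne
        · refine ⟨Δ1, h1, fun x hx => ?_⟩
          rcases List.mem_cons.1 hx with rfl | hx
          · exact ha
          · exact hl1 x hx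
        · rcases hchain h1 h2 hne with hsub | hsub
          · refine ⟨Δ2, h2, fun x hx => ?_⟩
            rcases List.mem_cons.1 hx with rfl | hx
            · exact ha
            · exact hsub (hl1 x hx)
          · refine ⟨Δ1, h1, fun x hx => ?_⟩
            rcases List.mem_cons.1 hx with rfl | hx
            · exact hsub ha
            · exact hl1 x hx
    obtain ⟨Δ', hΔ'c, hΔ'⟩ := key
    exact (hcS hΔ'c).2 ⟨l, hΔ', hder⟩
  obtain ⟨Δ, hΓΔ, hmax⟩ := zorn_subset_nonempty S hzorn Γ ⟨subset_rfl, hc⟩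
  · have hCon : LCon L Δ := hmax.1.2
    -- derivability closure
    have der : ∀ φ : MF Unit,
        (∃ l : List (MF Unit), (∀ x ∈ l, x ∈ Δ) ∧ MF.imp (MF.bigAnd l) φ ∈ L) → φ ∈ Δ := by
      rintro φ ⟨l, hl, hd⟩
      by_contra hφ
      have hni : ¬ LCon L (insert φ Δ) := by
        intro hcon
        have hsub := hmax.2 ⟨hmax.1.1.trans (Set.subset_insert _ _), hcon⟩
          (Set.subset_insert _ _)
        exact hφ (hsub (Set.mem_insert φ Δ))
      rw [LCon, not_not] at hni
      obtain ⟨l', hl', hd'⟩ := hni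
      refine hCon ⟨l ++ l'.filter (fun x => x ≠ φ), ?_, ?_⟩
      · intro x hx
        rcases List.mem_append.1 hx with h | h
        · exact hl x h
        · obtain ⟨h1, h2⟩ := List.mem_filter.1 h
          rcases hl' x h1 with rfl | h3
          · simp at h2
          · exact h3
      · refine LcutBot hL hd hd' ?_
        intro x hx
        rcases hl' x hx with rfl | h
        · exact Or.inl rfl
        · by_cases hxφ : x = φ
          · exact Or.inl hxφ
          · exact Or.inr (List.mem_filter.2 ⟨hx, by simpa using hxφ⟩)
    have compl : ∀ φ : MF Unit, φ ∉ Δ → φ.neg ∈ Δ := by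
      intro φ hφ
      have hni : ¬ LCon L (insert φ Δ) := by
        intro hcon
        have hsub := hmax.2 ⟨hmax.1.1.trans (Set.subset_insert _ _), hcon⟩
          (Set.subset_insert _ _)
        exact hφ (hsub (Set.mem_insert φ Δ))
      rw [LCon, not_not] at hni
      obtain ⟨l', hl', hd'⟩ := hni
      refine der φ.neg ⟨l'.filter (fun x => x ≠ φ), ?_, ?_⟩
      · intro x hx
        obtain ⟨h1, h2⟩ := List.mem_filter.1 hx
        rcases hl' x h1 with rfl | h3
        · simp at h2
        · exact h3
      · refine LnegFrom hL hd' ?_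
        intro x hx
        rcases hl' x hx with rfl | h
        · exact Or.inl rfl
        · by_cases hxφ : x = φ
          · exact Or.inl hxφ
          · exact Or.inr (List.mem_filter.2 ⟨hx, by simpa using hxφ⟩)
    have noBoth : ∀ φ : MF Unit, φ ∈ Δ → φ.neg ∈ Δ → False := by
      intro φ h1 h2
      refine hCon ⟨[φ, φ.neg], ?_, Ltaut hL ?_⟩
      · intro x hx
        rcases List.mem_cons.1 hx with rfl | hx
        · exact h1
        · rcases List.mem_cons.1 hx with rfl | hx
          · exact h2
          · simp at hx
      · intro f hb hi
        simp only [fBigAnd hb hi, hi, fBot hb, fNeg hb hi, fAnd hb hi, MF.bigAnd,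
          fTop hb hi, List.mem_cons, List.not_mem_nil]
        tauto
    refine ⟨(· ∈ Δ), ⟨?_, ?_, ?_⟩, fun φ hφ => hΓΔ hφ⟩
    · intro hbot
      refine hCon ⟨[MF.bot], by simpa using hbot, Ltaut hL ?_⟩
      intro f hb hi
      simp only [fBigAnd hb hi, hi, fBot hb, fAnd hb hi, MF.bigAnd, fTop hb hi,
        List.mem_cons, List.not_mem_nil]
      tauto
    · intro a b
      constructor
      · intro hab ha
        refine der b ⟨[MF.imp a b, a], ?_, Ltaut hL ?_⟩
        · intro x hx
          rcases List.mem_cons.1 hx with rfl | hx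
          · exact hab
          · rcases List.mem_cons.1 hx with rfl | hx
            · exact ha
            · simp at hx
        · intro f hb hi
          simp only [fBigAnd hb hi, hi, fBot hb, List.mem_cons, List.not_mem_nil]
          intro h
          have h1 := h _ (Or.inl rfl)
          rw [hi] at h1
          exact h1 (h _ (Or.inr (Or.inl rfl)))
      · intro hab
        by_cases ha : a ∈ Δ
        · refine der (MF.imp a b) ⟨[b], by simpa using hab ha, Ltaut hL ?_⟩
          intro f hb hi
          simp only [fBigAnd hb hi, hi, List.mem_cons, List.not_mem_nil]
          tauto
        · refine der (MF.imp a b) ⟨[a.neg], by simpa using compl a ha, Ltaut hL ?_⟩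
          intro f hb hi
          simp only [fBigAnd hb hi, hi, List.mem_cons, List.not_mem_nil]
          intro h ha'
          have h1 := h _ (Or.inl rfl)
          rw [fNeg hb hi] at h1
          exact absurd ha' h1
    · intro φ hφ
      refine der φ ⟨[], by simp, ?_⟩
      refine hL.mp (Ltaut hL ?_) hφ
      intro f hb hi
      simp only [hi]
      tauto

end Lind

/-- Canonical accessibility between theories. -/
def Rc (v w : MF Unit → Prop) : Prop := ∀ φ, w φ → v (MF.dia () φ)

theorem Ltrans_inst {L : Set (MF Unit)} (hL : IsNormalLogic L)
    (htr : MF.imp (.dia () (.dia () (.var 0))) (.dia () (.var 0)) ∈ L) (a : MF Unit) :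
    MF.imp (.dia () (.dia () a)) (.dia () a) ∈ L := by
  have := hL.subst_mem (fun _ => a) htr
  exact this

theorem Rc_trans {L : Set (MF Unit)} (hL : IsNormalLogic L)
    (htr : MF.imp (.dia () (.dia () (.var 0))) (.dia () (.var 0)) ∈ L)
    {u v w : MF Unit → Prop} (hu : Th L u) (h1 : Rc u v) (h2 : Rc v w) : Rc u w :=
  fun φ hφ => hu.det (Ltrans_inst hL htr φ) (h1 _ (h2 _ hφ))

theorem existsSucc {L : Set (MF Unit)} (hL : IsNormalLogic L)
    {v : MF Unit → Prop} (hv : Th L v) {φ : MF Unit} (h : v (.dia () φ)) :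
    ∃ w, Th L w ∧ Rc v w ∧ w φ := by
  classical
  have key : ∀ l : List (MF Unit), (∀ x ∈ l, v (MF.neg (.dia () x.neg))) →
      v (.dia () (MF.and φ (MF.bigAnd l))) := by
    intro l hl
    induction l with
    | nil =>
      refine hv.det (Lmono hL (Ltaut hL ?_)) h
      intro f hb hi
      simp only [hi, fAnd hb hi, fTop hb hi, MF.bigAnd]
      tauto
    | cons a l ih =>
      have h1 := ih fun x hx => hl x (List.mem_cons_of_mem _ hx)
      have ha := hl a List.mem_cons_self
      have h2 := hv.det (LdiaK hL (MF.and φ (MF.bigAnd l)) a) (hv.andI.2 ⟨h1, ha⟩)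
      refine hv.det (Lmono hL (Ltaut hL ?_)) h2
      intro f hb hi
      simp only [hi, fAnd hb hi, MF.bigAnd]
      tauto
  have hcon : LCon L (insert φ {ψ | v (MF.neg (.dia () ψ.neg))}) := by
    rintro ⟨l, hl, hder⟩
    set m := l.filter (fun x => x ≠ φ) with hm
    have hsub : ∀ x ∈ l, x = φ ∨ x ∈ m := by
      intro x hx
      by_cases hxφ : x = φ
      · exact Or.inl hxφ
      · exact Or.inr (List.mem_filter.2 ⟨hx, by simpa using hxφ⟩)
    have hmem : ∀ x ∈ m, v (MF.neg (.dia () x.neg)) := by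
      intro x hx
      obtain ⟨h1, h2⟩ := List.mem_filter.1 hx
      rcases hl x h1 with rfl | h3
      · simp at h2
      · exact h3
    have hk := key m hmem
    have himp : MF.imp (MF.and φ (MF.bigAnd m)) .bot ∈ L := by
      refine hL.mp (Ltaut hL ?_) hder
      intro f hb hi
      simp only [hi, fBigAnd hb hi, fAnd hb hi, fBot hb]
      intro hl' hφm
      apply hl'
      intro x hx
      rcases hsub x hx with rfl | hxm
      · exact hφm.1
      · exact hφm.2 x hxm
    have hdbot : v (.dia () .bot) := hv.det (Lmono hL himp) hk
    exact (hv.negI.1 (hv.ofL (hL.dia_bot ()))) hdbot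
  obtain ⟨w, hw, hΓw⟩ := lindenbaum hL hcon
  refine ⟨w, hw, ?_, hΓw φ (Set.mem_insert _ _)⟩
  intro ψ hψ
  by_contra hnd
  have hiff : MF.iff (.dia () ψ.neg.neg) (.dia () ψ) ∈ L := by
    refine Ldia_iff hL (Liff_intro hL (Ltaut hL ?_) (Ltaut hL ?_)) <;>
      (intro f hb hi; simp only [hi, fNeg hb hi]; tauto)
  have hnot : ¬ v (.dia () ψ.neg.neg) := fun hx => hnd ((hv.iffE hiff).1 hx)
  have hbox : v (MF.neg (.dia () ψ.neg.neg)) := hv.negI.2 hnot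
  have hmem : ψ.neg ∈ insert φ {ψ' | v (MF.neg (.dia () ψ'.neg))} :=
    Set.mem_insert_of_mem _ hbox
  exact (hw.negI.1 (hΓw _ hmem)) hψ




/-! #### Rank machinery along a putative strict chain -/

def Ecum (e : ℕ → MF Unit) : ℕ → MF Unit
  | 0 => e 0
  | i+1 => MF.or (Ecum e i) (e (i+1))

def epsF (γ : ℕ → MF Unit) (i : ℕ) : MF Unit := MF.or (γ i) (.dia () (γ i))

def EF (γ : ℕ → MF Unit) (n i : ℕ) : MF Unit :=
  if i < n then Ecum (epsF γ) i else MF.top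

noncomputable def rnkF (γ : ℕ → MF Unit) (n : ℕ) (u : MF Unit → Prop) : ℕ :=
  sInf {i | u (EF γ n i)}

def chiF (γ : ℕ → MF Unit) (n : ℕ) : MF Unit :=
  MF.bigOr (((List.range (n+1)).filter (fun i => i % 2 = 0)).map
    (fun i => if i = 0 then EF γ n 0 else MF.and (EF γ n i) ((EF γ n (i-1)).neg)))

section Height
variable {L : Set (MF Unit)} (hL : IsNormalLogic L)

theorem thEcum {u : MF Unit → Prop} (hu : Th L u) (e : ℕ → MF Unit) (i : ℕ) :
    u (Ecum e i) ↔ ∃ t, t ≤ i ∧ u (e t) := by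
  induction i with
  | zero =>
    simp only [Ecum, Nat.le_zero]
    exact ⟨fun h => ⟨0, rfl, h⟩, fun ⟨t, ht, h⟩ => ht ▸ h⟩
  | succ i ih =>
    rw [Ecum, hu.orI, ih]
    constructor
    · rintro (⟨t, ht, h⟩ | h)
      · exact ⟨t, by omega, h⟩
      · exact ⟨i+1, le_refl _, h⟩
    · rintro ⟨t, ht, h⟩
      by_cases hti : t ≤ i
      · exact Or.inl ⟨t, hti, h⟩
      · have : t = i + 1 := by omega
        exact Or.inr (this ▸ h)

include hL

theorem Edown (htr : MF.imp (.dia () (.dia () (.var 0))) (.dia () (.var 0)) ∈ L)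
    {u w : MF Unit → Prop} (hu : Th L u) (hw : Th L w) (hR : Rc u w)
    (γ : ℕ → MF Unit) (n i : ℕ) (h : w (EF γ n i)) : u (EF γ n i) := by
  unfold EF at h ⊢
  by_cases hin : i < n
  · rw [if_pos hin] at h ⊢
    rw [thEcum hw] at h
    rw [thEcum hu]
    obtain ⟨t, ht, hwt⟩ := h
    refine ⟨t, ht, ?_⟩
    unfold epsF at hwt ⊢
    rw [hw.orI] at hwt
    rw [hu.orI]
    rcases hwt with h1 | h1
    · exact Or.inr (hR _ h1)
    · exact Or.inr (hu.det (Ltrans_inst hL htr _) (hR _ h1))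
  · rw [if_neg hin] at h ⊢
    exact hu.topI

omit hL

theorem EF_mono {u : MF Unit → Prop} (hu : Th L u) {γ : ℕ → MF Unit} {n i j : ℕ}
    (hij : i ≤ j) (h : u (EF γ n i)) : u (EF γ n j) := by
  unfold EF at h ⊢
  by_cases hjn : j < n
  · have hin : i < n := by omega
    rw [if_pos hin] at h
    rw [if_pos hjn]
    rw [thEcum hu] at h
    rw [thEcum hu]
    obtain ⟨t, ht, h⟩ := h
    exact ⟨t, by omega, h⟩
  · rw [if_neg hjn]
    exact hu.topI

theorem rnk_mem {u : MF Unit → Prop} (hu : Th L u) (γ : ℕ → MF Unit) (n : ℕ) :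
    u (EF γ n (rnkF γ n u)) := by
  have hne : n ∈ {i | u (EF γ n i)} := by
    show u (EF γ n n)
    unfold EF
    rw [if_neg (lt_irrefl n)]
    exact hu.topI
  exact Nat.sInf_mem ⟨n, hne⟩

theorem rnk_le {u : MF Unit → Prop} {γ : ℕ → MF Unit} {n i : ℕ}
    (h : u (EF γ n i)) : rnkF γ n u ≤ i := Nat.sInf_le h

theorem rnk_le_n {u : MF Unit → Prop} (hu : Th L u) (γ : ℕ → MF Unit) (n : ℕ) :
    rnkF γ n u ≤ n := by
  refine rnk_le ?_
  unfold EF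
  rw [if_neg (lt_irrefl n)]
  exact hu.topI

theorem rnk_not_lt {u : MF Unit → Prop} {γ : ℕ → MF Unit} {n i : ℕ}
    (h : i < rnkF γ n u) : ¬ u (EF γ n i) := Nat.notMem_of_lt_sInf h

theorem rnk_ge {u : MF Unit → Prop} (hu : Th L u) {γ : ℕ → MF Unit} {n i : ℕ}
    (h : rnkF γ n u ≤ i) : u (EF γ n i) := EF_mono hu h (rnk_mem hu γ n)

include hL

theorem rnk_mono (htr : MF.imp (.dia () (.dia () (.var 0))) (.dia () (.var 0)) ∈ L)
    {u w : MF Unit → Prop} (hu : Th L u) (hw : Th L w) (hR : Rc u w)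
    (γ : ℕ → MF Unit) (n : ℕ) : rnkF γ n u ≤ rnkF γ n w :=
  rnk_le (Edown hL htr hu hw hR γ n _ (rnk_mem hw γ n))

omit hL

theorem chi_iff {u : MF Unit → Prop} (hu : Th L u) (γ : ℕ → MF Unit) (n : ℕ) :
    u (chiF γ n) ↔ rnkF γ n u % 2 = 0 := by
  rw [chiF, hu.bigOrI]
  constructor
  · rintro ⟨x, hx, hux⟩
    obtain ⟨i, hi, rfl⟩ := List.mem_map.1 hx
    obtain ⟨hirange, hieven⟩ := List.mem_filter.1 hi
    have hieven' : i % 2 = 0 := by simpa using hieven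
    by_cases hi0 : i = 0
    · subst hi0
      rw [if_pos rfl] at hux
      have := rnk_le (u := u) (γ := γ) (n := n) hux
      omega
    · rw [if_neg hi0] at hux
      obtain ⟨h1, h2⟩ := hu.andI.1 hux
      have ha := rnk_le (u := u) h1
      have hb := hu.negI.1 h2
      have hc : ¬ rnkF γ n u ≤ i - 1 := fun hcc => hb (rnk_ge hu hcc)
      omega
  · intro hpar
    have hrn := rnk_le_n hu γ n
    refine ⟨_, List.mem_map.2 ⟨rnkF γ n u,
      List.mem_filter.2 ⟨List.mem_range.2 (by omega), by simpa using hpar⟩, rfl⟩, ?_⟩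
    by_cases h0 : rnkF γ n u = 0
    · rw [if_pos h0]
      have := rnk_mem hu γ n
      rwa [h0] at this
    · rw [if_neg h0]
      exact hu.andI.2 ⟨rnk_mem hu γ n, hu.negI.2 (rnk_not_lt (by omega))⟩

end Height


/-! #### The alternating one-variable formulas and their collapse -/

def litf (t : ℕ) : MF Unit := if t % 2 = 0 then .var 0 else (MF.var 0).neg

def Aform : ℕ → MF Unit
  | 0 => .var 0
  | m+1 => MF.and (litf (m+1)) (.dia () (Aform m))

theorem litf_add_two (t : ℕ) : litf (t+2) = litf t := by
  have h : (t+2) % 2 = t % 2 := by omega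
  simp [litf, h]

theorem Aform_vars (m : ℕ) : (Aform m).varsBelow 1 := by
  induction m with
  | zero => simp [Aform, MF.varsBelow]
  | succ m ih =>
    by_cases h : (m+1) % 2 = 0 <;>
      simp [Aform, litf, MF.varsBelow, MF.and, MF.neg, h, ih]

section ACollapse
variable {L : Set (MF Unit)} (hL : IsNormalLogic L)
include hL

theorem Land_left (a b : MF Unit) : MF.imp (MF.and a b) a ∈ L := by
  refine Ltaut hL ?_
  intro f hb hi; simp only [hi, fAnd hb hi]; tauto

theorem Land_right (a b : MF Unit) : MF.imp (MF.and a b) b ∈ L := by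
  refine Ltaut hL ?_
  intro f hb hi; simp only [hi, fAnd hb hi]; tauto

theorem Limp_self (a : MF Unit) : MF.imp a a ∈ L := by
  refine Ltaut hL ?_
  intro f hb hi; simp only [hi]; tauto

theorem Land_intro {x a b : MF Unit} (h1 : MF.imp x a ∈ L) (h2 : MF.imp x b ∈ L) :
    MF.imp x (MF.and a b) ∈ L := by
  refine Lmp2 hL (Ltaut hL ?_) h1 h2
  intro f hb hi; simp only [hi, fAnd hb hi]; tauto

theorem Adescend (htr : MF.imp (.dia () (.dia () (.var 0))) (.dia () (.var 0)) ∈ L)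
    (m : ℕ) : MF.imp (Aform (m+2)) (Aform m) ∈ L := by
  cases m with
  | zero =>
    have e : Aform 2 = MF.and (.var 0) (.dia () (Aform 1)) := by
      simp [Aform, litf]
    rw [e]
    exact Land_left hL _ _
  | succ j =>
    have l1 : MF.imp (Aform (j+3)) (.dia () (Aform (j+2))) ∈ L :=
      Land_right hL (litf (j+3)) (.dia () (Aform (j+2)))
    have s1 : MF.imp (.dia () (Aform (j+2))) (.dia () (Aform (j+1))) ∈ L := by
      have t1 : MF.imp (Aform (j+2)) (.dia () (Aform (j+1))) ∈ L :=
        Land_right hL (litf (j+2)) (.dia () (Aform (j+1)))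
      exact Limp_trans hL (Lmono hL t1) (Ltrans_inst hL htr _)
    have s2 : MF.imp (.dia () (Aform (j+1))) (.dia () (Aform j)) ∈ L := by
      have t1 : MF.imp (Aform (j+1)) (.dia () (Aform j)) ∈ L :=
        Land_right hL (litf (j+1)) (.dia () (Aform j))
      exact Limp_trans hL (Lmono hL t1) (Ltrans_inst hL htr _)
    have main : MF.imp (Aform (j+3)) (.dia () (Aform j)) ∈ L :=
      Limp_trans hL l1 (Limp_trans hL s1 s2)
    have llit : MF.imp (Aform (j+3)) (litf (j+1)) ∈ L := by
      have h2 : MF.imp (litf (j+3)) (litf (j+1)) ∈ L := by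
        rw [litf_add_two (j+1)]
        exact Limp_self hL _
      exact Limp_trans hL (Land_left hL (litf (j+3)) (.dia () (Aform (j+2)))) h2
    exact Land_intro hL llit main

theorem AdescendM (htr : MF.imp (.dia () (.dia () (.var 0))) (.dia () (.var 0)) ∈ L)
    (a s : ℕ) : MF.imp (Aform (a + 2*s)) (Aform a) ∈ L := by
  induction s with
  | zero => simpa using Limp_self hL (Aform a)
  | succ s ih =>
    have e : a + 2*(s+1) = (a + 2*s) + 2 := by ring
    rw [e]
    exact Limp_trans hL (Adescend hL htr (a + 2*s)) ih

theorem Lcong_and_dia (c X Y : MF Unit) (h : MF.iff X Y ∈ L) :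
    MF.iff (MF.and c (.dia () X)) (MF.and c (.dia () Y)) ∈ L := by
  have m1 := Lmono hL (Liff_mp hL h)
  have m2 := Lmono hL (Liff_mpr hL h)
  refine Lmp2 hL (Ltaut hL ?_) m1 m2
  intro f hb hi; simp only [hi, fAnd hb hi, fIff hb hi]; tauto

theorem AstepShift (m : ℕ) (h : MF.iff (Aform m) (Aform (m+2)) ∈ L) :
    MF.iff (Aform (m+2)) (Aform (m+4)) ∈ L := by
  have c1 := Lcong_and_dia hL (litf (m+1)) _ _ h
  rw [show MF.and (litf (m+1)) (.dia () (Aform m)) = Aform (m+1) from rfl] at c1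
  rw [show litf (m+1) = litf (m+3) from (litf_add_two (m+1)).symm] at c1
  rw [show MF.and (litf (m+3)) (.dia () (Aform (m+2))) = Aform (m+3) from rfl] at c1
  have c2 := Lcong_and_dia hL (litf (m+2)) _ _ c1
  rw [show MF.and (litf (m+2)) (.dia () (Aform (m+1))) = Aform (m+2) from rfl] at c2
  rw [show litf (m+2) = litf (m+4) from (litf_add_two (m+2)).symm] at c2
  rw [show MF.and (litf (m+4)) (.dia () (Aform (m+3))) = Aform (m+4) from rfl] at c2
  exact c2

theorem Acollapse (htr : MF.imp (.dia () (.dia () (.var 0))) (.dia () (.var 0)) ∈ L)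
    (h1 : kFinite L 1) :
    ∃ j : ℕ, ∀ n, 2*j ≤ n → n % 2 = 0 → MF.iff (Aform n) (Aform (n+2)) ∈ L := by
  classical
  obtain ⟨SF, hSF⟩ := h1
  have hrep : ∀ j : ℕ, ∃ ψ, ψ ∈ SF ∧ MF.iff (Aform (2*j)) ψ ∈ L := by
    intro j
    obtain ⟨ψ, h1, h2⟩ := hSF _ (Aform_vars (2*j))
    exact ⟨ψ, h1, h2⟩
  choose g hg1 hg2 using hrep
  have hpig : ∃ a ∈ Finset.range (SF.card + 1), ∃ b ∈ Finset.range (SF.card + 1),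
      a ≠ b ∧ g a = g b := by
    refine Finset.exists_ne_map_eq_of_card_lt_of_maps_to (t := SF) ?_ ?_
    · simp
    · intro j _
      exact hg1 j
  obtain ⟨a0, _, b0, _, hne, heq⟩ := hpig
  -- normalize so that a < b
  obtain ⟨a, b, hab, hgab⟩ : ∃ a b, a < b ∧ g a = g b := by
    rcases lt_or_gt_of_ne hne with h | h
    · exact ⟨a0, b0, h, heq⟩
    · exact ⟨b0, a0, h, heq.symm⟩
  have hiffab : MF.iff (Aform (2*a)) (Aform (2*b)) ∈ L := by
    have := Liff_trans hL (hg2 a) (hgab ▸ Liff_symm hL (hg2 b))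
    exact this
  have hstep0 : MF.iff (Aform (2*a)) (Aform (2*a+2)) ∈ L := by
    refine Liff_intro hL ?_ (Adescend hL htr (2*a))
    have hdown : MF.imp (Aform (2*b)) (Aform (2*a+2)) ∈ L := by
      have e : 2*b = (2*a+2) + 2*(b - a - 1) := by omega
      rw [e]
      exact AdescendM hL htr (2*a+2) (b - a - 1)
    exact Limp_trans hL (Liff_mp hL hiffab) hdown
  have hall : ∀ s : ℕ, MF.iff (Aform (2*a + 2*s)) (Aform (2*a + 2*s + 2)) ∈ L := by
    intro s
    induction s with
    | zero => simpa using hstep0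
    | succ s ih =>
      have e : 2*a + 2*(s+1) = (2*a + 2*s) + 2 := by ring
      rw [e]
      have := AstepShift hL _ ih
      have e2 : 2*a + 2*s + 2 + 2 = 2*a + 2*s + 4 := by ring
      rw [e2]
      exact this
  refine ⟨a, fun n hn hpar => ?_⟩
  have e : n = 2*a + 2*((n - 2*a)/2) := by omega
  rw [e]
  have := hall ((n - 2*a)/2)
  convert this using 2 <;> omega

end ACollapse


/-! #### No long strict chains in the canonical model -/

section NoChain
variable {L : Set (MF Unit)} (hL : IsNormalLogic L)
include hL

theorem no_chain (htr : MF.imp (.dia () (.dia () (.var 0))) (.dia () (.var 0)) ∈ L)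
    {n : ℕ} (hn : n % 2 = 0)
    (hAeq : MF.iff (Aform n) (Aform (n+2)) ∈ L)
    (c : ℕ → MF Unit → Prop) (hth : ∀ i, i ≤ n → Th L (c i))
    (hR : ∀ i, i < n → Rc (c i) (c (i+1)))
    (hnR : ∀ i, i < n → ¬ Rc (c (i+1)) (c i)) : False := by
  classical
  -- one-step witnesses
  have hab : ∀ i, i < n → ∃ γ : MF Unit,
      c i γ ∧ ¬ c (i+1) γ ∧ ¬ c (i+1) (MF.dia () γ) := by
    intro i hi
    have hthi := hth i (le_of_lt hi)
    have hthi1 := hth (i+1) (by omega)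
    have hne : c i ≠ c (i+1) := by
      intro he
      apply hnR i hi
      have h := hR i hi
      rw [← he] at h ⊢
      exact h
    have hβ : ∃ β, c i β ∧ ¬ c (i+1) β := by
      by_contra hno
      push_neg at hno
      apply hne
      funext φ
      apply propext
      constructor
      · exact hno φ
      · intro h
        by_contra hni
        exact (hthi1.negI.1 (hno φ.neg (hthi.negI.2 hni))) h
    obtain ⟨β, hb1, hb2⟩ := hβ
    have hα : ∃ α, c i α ∧ ¬ c (i+1) (MF.dia () α) := by
      by_contra hno
      push_neg at hno
      exact hnR i hi fun φ hφ => hno φ hφ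
    obtain ⟨α, ha1, ha2⟩ := hα
    refine ⟨MF.and α β, hthi.andI.2 ⟨ha1, hb1⟩, ?_, ?_⟩
    · intro hmem
      exact hb2 ((hthi1.andI.1 hmem).2)
    · intro hmem
      refine ha2 (hthi1.det (Lmono hL (Land_left hL α β)) hmem)
  obtain ⟨γ, hγ⟩ : ∃ γ : ℕ → MF Unit, ∀ i, i < n →
      c i (γ i) ∧ ¬ c (i+1) (γ i) ∧ ¬ c (i+1) (MF.dia () (γ i)) :=
    ⟨fun i => if h : i < n then Classical.choose (hab i h) else MF.top,
      fun i h => by dsimp only; rw [dif_pos h]; exact Classical.choose_spec (hab i h)⟩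
  -- composite accessibility along the chain
  have hRM : ∀ j t, j < t → t ≤ n → Rc (c j) (c t) := by
    intro j t
    induction t with
    | zero => omega
    | succ t ih =>
      intro hjt htn
      rcases Nat.lt_or_ge j t with hlt | hge
      · exact Rc_trans hL htr (hth j (by omega)) (ih hlt (by omega)) (hR t (by omega))
      · have : j = t := by omega
        subst this
        exact hR j (by omega)
  -- values of the eps formulas on the chain
  have hepschain : ∀ t, t < n → ∀ j, j ≤ n → (c j (epsF γ t) ↔ j ≤ t) := by
    intro t ht j hj
    have hthj := hth j hj
    unfold epsF
    rw [hthj.orI]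
    constructor
    · rintro (h | h)
      · by_contra hlt
        push_neg at hlt
        rcases Nat.lt_or_ge (t+1) j with hgt | hge
        · exact (hγ t ht).2.2 (hRM (t+1) j hgt hj _ h)
        · have : j = t + 1 := by omega
          subst this
          exact (hγ t ht).2.1 h
      · by_contra hlt
        push_neg at hlt
        rcases Nat.lt_or_ge (t+1) j with hgt | hge
        · have h2 := hRM (t+1) j hgt hj _ h
          exact (hγ t ht).2.2 ((hth (t+1) (by omega)).det (Ltrans_inst hL htr _) h2)
        · have : j = t + 1 := by omega
          subst this
          exact (hγ t ht).2.2 h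
    · intro hjt
      rcases Nat.lt_or_ge j t with hlt | hge
      · exact Or.inr (hRM j t hlt (by omega) _ (hγ t ht).1)
      · have : j = t := by omega
        subst this
        exact Or.inl (hγ j ht).1
  -- values of the cumulative formulas on the chain
  have hEchain : ∀ i j, j ≤ n → (c j (EF γ n i) ↔ j ≤ i) := by
    intro i j hj
    have hthj := hth j hj
    unfold EF
    by_cases hin : i < n
    · rw [if_pos hin, thEcum hthj]
      constructor
      · rintro ⟨t, hti, ht⟩
        have := (hepschain t (by omega) j hj).1 ht
        omega
      · intro hji
        exact ⟨i, le_refl _, (hepschain i hin j hj).2 hji⟩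
    · rw [if_neg hin]
      exact ⟨fun _ => by omega, fun _ => hthj.topI⟩
  -- ranks on the chain
  have hrnkchain : ∀ j, j ≤ n → rnkF γ n (c j) = j := by
    intro j hj
    have hthj := hth j hj
    have h1 := rnk_mem hthj γ n
    rw [hEchain _ j hj] at h1
    have h2 : rnkF γ n (c j) ≤ j := rnk_le ((hEchain j j hj).2 (le_refl j))
    omega
  -- the substitution p₀ ↦ χ
  set σ : ℕ → MF Unit := fun i => if i = 0 then chiF γ n else MF.var i with hσ
  have As0 : (Aform 0).subst σ = chiF γ n := by simp [Aform, MF.subst, hσ]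
  have AsSucc : ∀ m, (Aform (m+1)).subst σ =
      MF.and (if (m+1) % 2 = 0 then chiF γ n else (chiF γ n).neg)
        (.dia () ((Aform m).subst σ)) := by
    intro m
    by_cases h : (m+1) % 2 = 0 <;>
      simp [Aform, litf, MF.subst, MF.and, MF.neg, h, hσ]
  -- parity of rank from satisfaction of A-formulas
  have hparity : ∀ m (u : MF Unit → Prop), Th L u → u ((Aform m).subst σ) →
      (rnkF γ n u % 2 = 0 ↔ m % 2 = 0) := by
    intro m u hu hA
    cases m with
    | zero =>
      rw [As0] at hA
      have := (chi_iff hu γ n).1 hA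
      constructor
      · intro _; omega
      · intro _; exact this
    | succ m =>
      rw [AsSucc] at hA
      have hlit := (hu.andI.1 hA).1
      by_cases h : (m+1) % 2 = 0
      · rw [if_pos h] at hlit
        have := (chi_iff hu γ n).1 hlit
        constructor
        · intro _; exact h
        · intro _; exact this
      · rw [if_neg h] at hlit
        have hnot := hu.negI.1 hlit
        have : ¬ rnkF γ n u % 2 = 0 := fun hc => hnot ((chi_iff hu γ n).2 hc)
        constructor
        · intro hc; exact absurd hc this
        · intro hc; exact absurd hc h
  -- chain satisfies the A-formulas
  have hS2 : ∀ m, m ≤ n → c (n - m) ((Aform m).subst σ) := by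
    intro m
    induction m with
    | zero =>
      intro _
      rw [As0]
      refine (chi_iff (hth n (le_refl n)) γ n).2 ?_
      rw [hrnkchain n (le_refl n)]
      simpa using hn
    | succ m ih =>
      intro hm
      have hth1 := hth (n - (m+1)) (by omega)
      rw [AsSucc]
      refine hth1.andI.2 ⟨?_, ?_⟩
      · have hr := hrnkchain (n - (m+1)) (by omega)
        by_cases h : (m+1) % 2 = 0
        · rw [if_pos h]
          refine (chi_iff hth1 γ n).2 ?_
          rw [hr]
          omega
        · rw [if_neg h]
          refine hth1.negI.2 ?_
          intro hc
          have := (chi_iff hth1 γ n).1 hc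
          rw [hr] at this
          omega
      · have hRR := hR (n - (m+1)) (by omega)
        have e : n - (m+1) + 1 = n - m := by omega
        rw [e] at hRR
        exact hRR _ (ih (by omega))
  -- bound on satisfaction depth
  have hS3 : ∀ m (u : MF Unit → Prop), Th L u → u ((Aform m).subst σ) →
      rnkF γ n u + m ≤ n := by
    intro m
    induction m with
    | zero =>
      intro u hu _
      simpa using rnk_le_n hu γ n
    | succ m ih =>
      intro u hu hA
      have hA' := hA
      rw [AsSucc] at hA'
      have hdia := (hu.andI.1 hA').2
      obtain ⟨w, hw, hRuw, hwA⟩ := existsSucc hL hu hdia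
      have ihw := ih w hw hwA
      have hmon := rnk_mono hL htr hu hw hRuw γ n
      have p1 := hparity (m+1) u hu hA
      have p2 := hparity m w hw hwA
      have hne : rnkF γ n u ≠ rnkF γ n w := by
        intro he
        rw [he] at p1
        by_cases hb : rnkF γ n w % 2 = 0
        · have := p1.1 hb
          have := p2.1 hb
          omega
        · have h1 : ¬ (m+1) % 2 = 0 := fun hh => hb (p1.2 hh)
          have h2 : ¬ m % 2 = 0 := fun hh => hb (p2.2 hh)
          omega
      omega
  -- wrap up
  have hc0 : c 0 ((Aform n).subst σ) := by
    have := hS2 n (le_refl n)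
    rwa [Nat.sub_self] at this
  have hiffsub : MF.iff ((Aform n).subst σ) ((Aform (n+2)).subst σ) ∈ L :=
    hL.subst_mem σ hAeq
  have hc0' : c 0 ((Aform (n+2)).subst σ) :=
    ((hth 0 (by omega)).iffE hiffsub).1 hc0
  have := hS3 (n+2) (c 0) (hth 0 (by omega)) hc0'
  omega

end NoChain


/-! #### Stratification: finitely many `k`-restricted theories -/

/-- Substitution masking variables `≥ k` by `⊥`. -/
def maskS (k : ℕ) : ℕ → MF Unit := fun i => if i < k then .var i else .bot

/-- The `k`-restriction of a theory. -/
def kth (k : ℕ) (v : MF Unit → Prop) : MF Unit → Prop := fun φ => v (φ.subst (maskS k))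

theorem subst_maskS {k : ℕ} {φ : MF Unit} (h : φ.varsBelow k) : φ.subst (maskS k) = φ := by
  induction φ with
  | var i =>
    have h' : i < k := h
    simp [MF.subst, maskS, h']
  | bot => rfl
  | imp a b iha ihb =>
    obtain ⟨h1, h2⟩ := h
    simp [MF.subst, iha h1, ihb h2]
  | dia a φ ih => simp [MF.subst, ih h]

/-- Generic "theory shapes". -/
def GF (P : Set (ℕ → Prop)) (T : Set (MF Unit → Prop)) : MF Unit → (ℕ → Prop) → Prop
  | .var i, p => p i
  | .bot, _ => False
  | .imp a b, p => GF P T a p → GF P T b p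
  | .dia _ a, _ => (∃ q ∈ P, GF P T a q) ∨ (∃ t ∈ T, t a)

/-- Admissible literal profiles. -/
def litSet (k : ℕ) : Set (ℕ → Prop) := {p | ∀ i, p i → i < k}

def Tnext (P0 : Set (ℕ → Prop)) (T : Set (MF Unit → Prop)) : Set (MF Unit → Prop) :=
  {g | ∃ P, P ⊆ P0 ∧ ∃ p ∈ P0, ∃ T', T' ⊆ T ∧ g = fun φ => GF P T' φ p}

def Tstage (k : ℕ) : ℕ → Set (MF Unit → Prop)
  | 0 => Tnext (litSet k) ∅
  | d+1 => Tnext (litSet k) (Tstage k d)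

theorem Tnext_mono {P0 : Set (ℕ → Prop)} {T T' : Set (MF Unit → Prop)} (h : T ⊆ T') :
    Tnext P0 T ⊆ Tnext P0 T' := by
  rintro g ⟨P, hP, p, hp, T'', hT'', rfl⟩
  exact ⟨P, hP, p, hp, T'', hT''.trans h, rfl⟩

theorem Tstage_mono {k : ℕ} : ∀ {d d' : ℕ}, d ≤ d' → Tstage k d ⊆ Tstage k d' := by
  have step : ∀ d, Tstage k d ⊆ Tstage k (d+1) := by
    intro d
    induction d with
    | zero => exact Tnext_mono (Set.empty_subset _)
    | succ d ih => exact Tnext_mono ih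
  intro d d' h
  induction d' with
  | zero => have : d = 0 := by omega
            subst this; exact subset_rfl
  | succ d' ih =>
    rcases Nat.lt_or_ge d (d'+1) with h1 | h1
    · exact (ih (by omega)).trans (step d')
    · have : d = d' + 1 := by omega
      subst this; exact subset_rfl

theorem litSet_finite (k : ℕ) : (litSet k).Finite := by
  classical
  have hsub : litSet k ⊆ Set.range (fun q : Fin k → Prop => fun i : ℕ => ∃ h : i < k, q ⟨i, h⟩) := by
    intro p hp
    refine ⟨fun j => p j.val, ?_⟩
    funext i
    apply propext
    constructor
    · rintro ⟨h, hq⟩; exact hq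
    · intro h; exact ⟨hp i h, h⟩
  exact (Set.finite_range _).subset hsub

theorem Tnext_finite {k : ℕ} {T : Set (MF Unit → Prop)} (hT : T.Finite) :
    (Tnext (litSet k) T).Finite := by
  classical
  have himg : Tnext (litSet k) T ⊆
      (fun x : Set (ℕ → Prop) × (ℕ → Prop) × Set (MF Unit → Prop) =>
        fun φ => GF x.1 x.2.2 φ x.2.1) ''
      ({P | P ⊆ litSet k} ×ˢ (litSet k ×ˢ {T' | T' ⊆ T})) := by
    rintro g ⟨P, hP, p, hp, T', hT', rfl⟩
    exact ⟨⟨P, p, T'⟩, ⟨hP, hp, hT'⟩, rfl⟩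
  refine Set.Finite.subset (Set.Finite.image _ ?_) himg
  exact Set.Finite.prod (litSet_finite k).finite_subsets
    (Set.Finite.prod (litSet_finite k) hT.finite_subsets)

theorem Tstage_finite (k d : ℕ) : (Tstage k d).Finite := by
  induction d with
  | zero => exact Tnext_finite Set.finite_empty
  | succ d ih => exact Tnext_finite ih

/-- Strict chains of theories of a given length starting at `v`. -/
def sChain (L : Set (MF Unit)) (v : MF Unit → Prop) (d : ℕ) : Prop :=
  ∃ c : ℕ → MF Unit → Prop, c 0 = v ∧ (∀ i, i ≤ d → Th L (c i)) ∧
    ∀ i, i < d → Rc (c i) (c (i+1)) ∧ ¬ Rc (c (i+1)) (c i)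

noncomputable def mvF (L : Set (MF Unit)) (v : MF Unit → Prop) : ℕ :=
  sInf {d | ¬ sChain L v d}

section Strat
variable {L : Set (MF Unit)} (hL : IsNormalLogic L) {H : ℕ}
  (hnc : ∀ v : MF Unit → Prop, ¬ sChain L v H)

theorem sChain_zero {v : MF Unit → Prop} (hv : Th L v) : sChain L v 0 :=
  ⟨fun _ => v, rfl, fun i _ => hv, fun i hi => by omega⟩

include hnc

theorem mv_le_H (v : MF Unit → Prop) : mvF L v ≤ H := Nat.sInf_le (hnc v)

theorem mv_pos {v : MF Unit → Prop} (hv : Th L v) : 1 ≤ mvF L v := by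
  rcases Nat.eq_zero_or_pos (mvF L v) with h | h
  · exfalso
    have hmem := Nat.sInf_mem (⟨H, hnc v⟩ : {d | ¬ sChain L v d}.Nonempty)
    have h' : sInf {d | ¬ sChain L v d} = 0 := h
    rw [h'] at hmem
    exact hmem (sChain_zero hv)
  · exact h

theorem mv_not_chain (v : MF Unit → Prop) : ¬ sChain L v (mvF L v) :=
  Nat.sInf_mem (⟨H, hnc v⟩ : {d | ¬ sChain L v d}.Nonempty)

theorem mv_strict_lt {v u : MF Unit → Prop} (hv : Th L v) (hu : Th L u)
    (h1 : Rc v u) (h2 : ¬ Rc u v) : mvF L u < mvF L v := by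
  have hpos := mv_pos hnc hv
  have hnot : ¬ sChain L u (mvF L v - 1) := by
    rintro ⟨c, hc0, hcth, hcs⟩
    apply mv_not_chain hnc v
    refine ⟨fun i => if i = 0 then v else c (i-1), by simp, ?_, ?_⟩
    · intro i hi
      by_cases h : i = 0
      · simpa [h] using hv
      · simpa [h] using hcth (i-1) (by omega)
    · intro i hi
      by_cases h : i = 0
      · subst h
        simpa [hc0] using ⟨h1, h2⟩
      · have e1 : ¬ (i + 1 = 0) := by omega
        simp only [h, e1, if_false]
        have := hcs (i-1) (by omega)
        have e2 : i - 1 + 1 = i + 1 - 1 := by omega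
        rw [e2] at this
        exact this
  have : mvF L u ≤ mvF L v - 1 := Nat.sInf_le hnot
  omega


include hL

theorem kth_in_stage (htr : MF.imp (.dia () (.dia () (.var 0))) (.dia () (.var 0)) ∈ L)
    (k : ℕ) :
    ∀ m, ∀ v : MF Unit → Prop, Th L v → mvF L v = m → kth k v ∈ Tstage k (m - 1) := by
  intro m
  induction m using Nat.strong_induction_on with
  | _ m IH =>
  intro v hv hm
  classical
  set Cl : Set (MF Unit → Prop) := {w | Th L w ∧ Rc v w ∧ Rc w v} with hCl
  set Strict : Set (MF Unit → Prop) := {w | Th L w ∧ Rc v w ∧ ¬ Rc w v} with hStrict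
  set P : Set (ℕ → Prop) := (fun w => fun i => i < k ∧ w (MF.var i)) '' Cl with hP
  set TT : Set (MF Unit → Prop) := kth k '' Strict with hTT
  have hQfor : ∀ u, Th L u → (u = v ∨ (Rc v u ∧ Rc u v)) → ∀ w, Rc u w → Rc v w := by
    intro u hu hQ w hw
    rcases hQ with rfl | ⟨h1, h2⟩
    · exact hw
    · exact Rc_trans hL htr hv h1 hw
  have hQback : ∀ u, Th L u → (u = v ∨ (Rc v u ∧ Rc u v)) → ∀ w, Rc v w → Rc u w := by
    intro u hu hQ w hw
    rcases hQ with rfl | ⟨h1, h2⟩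
    · exact hw
    · exact Rc_trans hL htr hu h2 hw
  have key : ∀ φ : MF Unit, ∀ u : MF Unit → Prop, Th L u → (u = v ∨ (Rc v u ∧ Rc u v)) →
      (kth k u φ ↔ GF P TT φ (fun i => i < k ∧ u (MF.var i))) := by
    intro φ
    induction φ with
    | var i =>
      intro u hu _
      show u ((MF.var i).subst (maskS k)) ↔ i < k ∧ u (MF.var i)
      by_cases h : i < k
      · rw [show (MF.var i).subst (maskS k) = MF.var i by simp [MF.subst, maskS, h]]
        exact ⟨fun hh => ⟨h, hh⟩, fun hh => hh.2⟩
      · rw [show (MF.var i).subst (maskS k) = MF.bot by simp [MF.subst, maskS, h]]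
        exact ⟨fun hb => absurd hb hu.1, fun hh => absurd hh.1 h⟩
    | bot =>
      intro u hu _
      show u (MF.bot.subst (maskS k)) ↔ False
      exact iff_false_intro hu.1
    | imp a b iha ihb =>
      intro u hu hQ
      show u (MF.imp (a.subst (maskS k)) (b.subst (maskS k))) ↔
        (GF P TT a (fun i => i < k ∧ u (MF.var i)) → GF P TT b (fun i => i < k ∧ u (MF.var i)))
      rw [hu.2.1]
      constructor
      · intro h hga
        exact (ihb u hu hQ).1 (h ((iha u hu hQ).2 hga))
      · intro h ha
        exact (ihb u hu hQ).2 (h ((iha u hu hQ).1 ha))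
    | dia un a ih =>
      intro u hu hQ
      show u (MF.dia un (a.subst (maskS k))) ↔
        ((∃ q ∈ P, GF P TT a q) ∨ (∃ t ∈ TT, t a))
      constructor
      · intro hdia
        obtain ⟨w, hw, hRuw, hwa⟩ := existsSucc hL hu hdia
        have hRvw : Rc v w := hQfor u hu hQ w hRuw
        by_cases hback : Rc w v
        · refine Or.inl ⟨(fun i => i < k ∧ w (MF.var i)), ⟨w, ⟨hw, hRvw, hback⟩, rfl⟩, ?_⟩
          exact (ih w hw (Or.inr ⟨hRvw, hback⟩)).1 hwa
        · exact Or.inr ⟨kth k w, ⟨w, ⟨hw, hRvw, hback⟩, rfl⟩, hwa⟩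
      · rintro (⟨q, ⟨w, hwCl, rfl⟩, hq⟩ | ⟨t, ⟨w, hwS, rfl⟩, ht⟩)
        · have hwa : kth k w a := (ih w hwCl.1 (Or.inr ⟨hwCl.2.1, hwCl.2.2⟩)).2 hq
          exact (hQback u hu hQ w hwCl.2.1) _ hwa
        · exact (hQback u hu hQ w hwS.2.1) _ ht
  have hfun : kth k v = fun φ => GF P TT φ (fun i => i < k ∧ v (MF.var i)) := by
    funext φ
    exact propext (key φ v hv (Or.inl rfl))
  have hPsub : P ⊆ litSet k := by
    rintro q ⟨w, _, rfl⟩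
    intro i hi
    exact hi.1
  have hpmem : (fun i => i < k ∧ v (MF.var i)) ∈ litSet k := fun i hi => hi.1
  rcases Nat.lt_or_ge m 2 with hm2 | hm2
  · have hm1 : m = 1 := by
      have h1 := mv_pos hnc hv
      omega
    have hTempty : TT ⊆ (∅ : Set (MF Unit → Prop)) := by
      rintro t ⟨w, ⟨hw, h1, h2⟩, rfl⟩
      exfalso
      have hlt : mvF L w < m := hm ▸ mv_strict_lt hnc hv hw h1 h2
      have := mv_pos hnc hw
      omega
    rw [hm1]
    show kth k v ∈ Tnext (litSet k) ∅
    exact ⟨P, hPsub, _, hpmem, TT, hTempty, hfun⟩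
  · have hTsub : TT ⊆ Tstage k (m - 2) := by
      rintro t ⟨w, ⟨hw, h1, h2⟩, rfl⟩
      have hlt : mvF L w < m := hm ▸ mv_strict_lt hnc hv hw h1 h2
      have := IH (mvF L w) hlt w hw rfl
      exact Tstage_mono (by omega) this
    have e : m - 1 = (m - 2) + 1 := by omega
    rw [e]
    show kth k v ∈ Tnext (litSet k) (Tstage k (m-2))
    exact ⟨P, hPsub, _, hpmem, TT, hTsub, hfun⟩

theorem kth_in_stage_H (htr : MF.imp (.dia () (.dia () (.var 0))) (.dia () (.var 0)) ∈ L)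
    (k : ℕ) (v : MF Unit → Prop) (hv : Th L v) : kth k v ∈ Tstage k H := by
  have h1 := kth_in_stage hL hnc htr k (mvF L v) v hv rfl
  have h2 := mv_le_H hnc v
  exact Tstage_mono (by omega) h1

end Strat


end MaksAux

/-- Maksimova: every 1-finite transitive normal unimodal logic is locally
tabular. -/
theorem stmt9 (L : Set (MF Unit)) (hL : IsNormalLogic L)
    (htrans : MF.imp (.dia () (.dia () (.var 0))) (.dia () (.var 0)) ∈ L)
    (h1 : kFinite L 1) :
    ∀ k : ℕ, kFinite L k := by
  intro k
  classical
  obtain ⟨j, hj⟩ := Acollapse hL htrans h1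
  have hnc : ∀ v : MF Unit → Prop, ¬ sChain L v (2*j) := by
    rintro v ⟨c, hc0, hth, hcs⟩
    exact no_chain hL htrans (n := 2*j) (by omega) (hj (2*j) (le_refl _) (by omega)) c hth
      (fun i hi => (hcs i hi).1) (fun i hi => (hcs i hi).2)
  set K : Set (MF Unit → Prop) := {t | ∃ v, Th L v ∧ t = kth k v} with hK
  have hKsub : K ⊆ Tstage k (2*j) := by
    rintro t ⟨v, hv, rfl⟩
    exact kth_in_stage_H hL hnc htrans k v hv
  have hKfin : K.Finite := (Tstage_finite k (2*j)).subset hKsub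
  set eS : MF Unit → Set (MF Unit → Prop) := fun φ => {t | t ∈ K ∧ t φ} with heS
  have same_e : ∀ φ ψ : MF Unit, φ.varsBelow k → ψ.varsBelow k → eS φ = eS ψ →
      MF.iff φ ψ ∈ L := by
    intro φ ψ hφ hψ he
    by_contra hni
    have hcon : LCon L {(MF.iff φ ψ).neg} := by
      rintro ⟨l, hl, hder⟩
      apply hni
      refine hL.mp (Ltaut hL ?_) hder
      intro f hb hi
      simp only [hi, fBigAnd hb hi, fBot hb]
      intro hder'
      by_contra hnf
      apply hder'
      intro x hx
      have hxe : x = (MF.iff φ ψ).neg := hl x hx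
      rw [hxe, fNeg hb hi]
      exact hnf
    obtain ⟨v, hv, hmem⟩ := lindenbaum hL hcon
    have hneg := hmem _ (Set.mem_singleton _)
    have hniff : ¬ v (MF.iff φ ψ) := hv.negI.1 hneg
    have hne : ¬ (v φ ↔ v ψ) := fun hh => hniff ((fIff hv.1 hv.2.1 φ ψ).2 hh)
    have ht : kth k v ∈ K := ⟨v, hv, rfl⟩
    have htφ : kth k v φ ↔ v φ := by
      show v (φ.subst (maskS k)) ↔ v φ
      rw [subst_maskS hφ]
    have htψ : kth k v ψ ↔ v ψ := by
      show v (ψ.subst (maskS k)) ↔ v ψ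
      rw [subst_maskS hψ]
    have h1 : kth k v ∈ eS φ ↔ kth k v ∈ eS ψ := by rw [he]
    simp only [heS, Set.mem_setOf_eq] at h1
    apply hne
    rw [← htφ, ← htψ]
    constructor
    · intro hh
      exact (h1.1 ⟨ht, hh⟩).2
    · intro hh
      exact (h1.2 ⟨ht, hh⟩).2
  have hEfin : (eS '' {φ | φ.varsBelow k}).Finite := by
    refine Set.Finite.subset hKfin.finite_subsets ?_
    rintro s ⟨φ, _, rfl⟩
    intro t ht
    exact ht.1
  set pick : Set (MF Unit → Prop) → MF Unit := fun s =>
    if h : ∃ φ : MF Unit, φ.varsBelow k ∧ eS φ = s then Classical.choose h else .bot with hpick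
  refine ⟨hEfin.toFinset.image pick, ?_⟩
  intro φ hφ
  have hmem : eS φ ∈ eS '' {φ | φ.varsBelow k} := ⟨φ, hφ, rfl⟩
  have hex : ∃ φ' : MF Unit, φ'.varsBelow k ∧ eS φ' = eS φ := ⟨φ, hφ, rfl⟩
  refine ⟨pick (eS φ), Finset.mem_image.2 ⟨eS φ, hEfin.mem_toFinset.2 hmem, rfl⟩, ?_⟩
  have hp : pick (eS φ) = Classical.choose hex := by
    rw [hpick]
    dsimp only
    rw [dif_pos hex]
  obtain ⟨hvb, heq⟩ := Classical.choose_spec hex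
  rw [hp]
  exact same_e φ _ hφ hvb heq.symm
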